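/- Let φ : ℝ → ℝ be continuously differentiable and increasing, and suppose there exist constants c, C, R > 0 such that c|x| ≤ |φ(x)| ≤ C|x| whenever |x| ≥ R. Then for every x ∈ ℝ and every y ≠ 0, the function s ↦ ω_{φ'}(x + i s) is differentiable at s = y with derivative equal to the Poisson-type integral ∫_ℝ y/((x − t)² + y²) φ'(t) dt. -/

import Mathlib

open MeasureTheory Complex

/-- The modified logarithm `log*|1 - z/t|`. -/
noncomputable def logStar (z : ℂ) (t : ℝ) : ℝ :=
  if 1 < |t| then Real.log (‖1 - z / (t : ℂ)‖) + z.re / t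
  else Real.log (‖1 - z / (t : ℂ)‖)

/-- The potential `ω_γ(z) = ∫ log*|1 - z/t| γ(t) dt`. -/
noncomputable def pot (γ : ℝ → ℝ) (z : ℂ) : ℝ :=
  ∫ t : ℝ, logStar z t * γ t

section Aux

open Set Metric

lemma aux_deriv_nonneg {φ : ℝ → ℝ} (hm : Monotone φ) {t d : ℝ} (hd : HasDerivAt φ d t) :
    0 ≤ d := by
  have h := hasDerivAt_iff_tendsto_slope.mp hd
  have h2 : Filter.Tendsto (slope φ t) (nhdsWithin t (Ioi t)) (nhds d) :=
    h.mono_left (nhdsWithin_mono _ (fun u hu => ne_of_gt hu))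
  refine ge_of_tendsto h2 ?_
  filter_upwards [self_mem_nhdsWithin] with u hu
  have h1 : (0:ℝ) ≤ φ u - φ t := sub_nonneg.mpr (hm (le_of_lt hu))
  have h3 : (0:ℝ) < u - t := sub_pos.mpr hu
  simpa [slope_def_field] using div_nonneg h1 h3.le

lemma aux_logStar_meas (z : ℂ) : Measurable (logStar z) := by
  have hdiv : Measurable fun t : ℝ => (1 : ℂ) - z / (t : ℂ) := by
    have : (fun t : ℝ => (1:ℂ) - z / (t:ℂ)) = fun t : ℝ => 1 - z * ((t⁻¹ : ℝ) : ℂ) := by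
      funext t; rw [div_eq_mul_inv, Complex.ofReal_inv]
    rw [this]
    exact measurable_const.sub
      (measurable_const.mul (Complex.measurable_ofReal.comp measurable_inv))
  have h1 : Measurable fun t : ℝ => Real.log (‖1 - z / (t:ℂ)‖) :=
    Real.measurable_log.comp (continuous_norm.measurable.comp hdiv)
  unfold logStar
  refine Measurable.ite ?_ (h1.add ?_) h1
  · exact measurableSet_lt measurable_const measurable_abs
  · exact measurable_const.div measurable_id

lemma aux_null_int {f : ℝ → ℝ} {s : Set ℝ} (hs : volume s = 0) : IntegrableOn f s := by
  rw [IntegrableOn, Measure.restrict_eq_zero.mpr hs]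
  exact integrable_zero_measure

lemma aux_rpow_int {T : ℝ} (hT : 0 < T) :
    IntegrableOn (fun t : ℝ => |t| ^ (-(1/2) : ℝ)) (Icc (-T) T) := by
  have base : IntegrableOn (fun t : ℝ => |t| ^ (-(1/2) : ℝ)) (Ioc 0 T) := by
    have h1 : IntegrableOn (fun t : ℝ => t ^ (-(1/2) : ℝ)) (Ioo 0 (T+1)) :=
      (intervalIntegral.integrableOn_Ioo_rpow_iff (by linarith)).mpr (by norm_num)
    have h2 : IntegrableOn (fun t : ℝ => |t| ^ (-(1/2) : ℝ)) (Ioo 0 (T+1)) := by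
      refine h1.congr_fun (fun t ht => ?_) measurableSet_Ioo
      rw [abs_of_pos ht.1]
    exact h2.mono_set (fun t ht => ⟨ht.1, by linarith [ht.2]⟩)
  have hneg : IntegrableOn (fun t : ℝ => |t| ^ (-(1/2) : ℝ)) (Ico (-T) 0) := by
    have key := (Measure.measurePreserving_neg (volume : Measure ℝ)).integrableOn_comp_preimage
      (Homeomorph.neg ℝ).measurableEmbedding (f := fun t : ℝ => |t| ^ (-(1/2) : ℝ))
      (s := Ico (-T) 0)
    have hpre : (Neg.neg ⁻¹' Ico (-T) (0:ℝ) : Set ℝ) = Ioc 0 T := by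
      ext t; simp only [mem_preimage, mem_Ico, mem_Ioc]
      constructor <;> rintro ⟨h1, h2⟩ <;> constructor <;> linarith
    have hcomp : ((fun t : ℝ => |t| ^ (-(1/2) : ℝ)) ∘ Neg.neg) = fun t : ℝ => |t| ^ (-(1/2) : ℝ) := by
      funext t; simp [Function.comp, abs_neg]
    rw [hpre, hcomp] at key
    exact key.mp base
  have hsp : Icc (-T) T = Ico (-T) 0 ∪ ({0} ∪ Ioc 0 T) := by
    ext t; simp only [mem_Icc, mem_union, mem_Ico, mem_singleton_iff, mem_Ioc]
    constructor
    · rintro ⟨ha, hb⟩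
      rcases lt_trichotomy t 0 with h | h | h
      · exact Or.inl ⟨ha, h⟩
      · exact Or.inr (Or.inl h)
      · exact Or.inr (Or.inr ⟨h, hb⟩)
    · rintro (⟨ha, hb⟩ | h | ⟨ha, hb⟩) <;> constructor <;> first | linarith | simp_all
  rw [hsp]
  exact hneg.union ((aux_null_int (by simp)).union base)

lemma aux_logStar_eq (x s t : ℝ) (ht : t ≠ 0) :
    logStar ((x : ℂ) + (s : ℂ) * Complex.I) t
      = (1/2) * Real.log ((1 - x/t)^2 + (s/t)^2) + (if 1 < |t| then x/t else 0) := by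
  have ht' : (t : ℂ) ≠ 0 := Complex.ofReal_ne_zero.mpr ht
  have h1 : (1 : ℂ) - ((x:ℂ) + (s:ℂ) * Complex.I) / (t:ℂ)
      = ((1 - x/t : ℝ) : ℂ) + ((-(s/t) : ℝ) : ℂ) * Complex.I := by
    push_cast
    field_simp
    ring
  have h2 : ‖1 - ((x:ℂ) + (s:ℂ) * Complex.I) / (t:ℂ)‖
      = Real.sqrt ((1 - x/t)^2 + (s/t)^2) := by
    rw [h1, Complex.norm_add_mul_I]
    norm_num [neg_div]
  have h3 : ((x:ℂ) + (s:ℂ) * Complex.I).re = x := by simp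
  unfold logStar
  rw [h2, Real.log_sqrt (by positivity), h3]
  split <;> ring

lemma aux_hasDerivAt (x t : ℝ) (ht : t ≠ 0) (d : ℝ) (s : ℝ) (hs : s ≠ 0) :
    HasDerivAt (fun s : ℝ => logStar ((x : ℂ) + (s : ℂ) * Complex.I) t * d)
      (s / ((x - t)^2 + s^2) * d) s := by
  have heq : (fun s : ℝ => logStar ((x : ℂ) + (s : ℂ) * Complex.I) t * d)
      = fun s : ℝ => ((1/2) * Real.log ((1 - x/t)^2 + (s/t)^2)
          + (if 1 < |t| then x/t else 0)) * d := by
    funext u; rw [aux_logStar_eq x u t ht]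
  rw [heq]
  have hD : ((1 - x/t)^2 + (s/t)^2) ≠ 0 := by positivity
  have hinner : HasDerivAt (fun s : ℝ => (1 - x/t)^2 + (s/t)^2) (2 * (s/t) * (1/t)) s := by
    have h0 : HasDerivAt (fun s : ℝ => s/t) (1/t) s := (hasDerivAt_id s).div_const t
    have h1 : HasDerivAt (fun s : ℝ => (s/t)^2) ((2:ℕ) * (s/t)^(2-1) * (1/t)) s := h0.pow 2
    simpa using h1.const_add ((1 - x/t)^2)
  have hlog := hinner.log hD
  have := ((hlog.const_mul (1/2:ℝ)).add_const (if 1 < |t| then x/t else 0)).mul_const d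
  refine this.congr_deriv ?_
  have hne2 : (x - t)^2 + s^2 ≠ 0 := by positivity
  field_simp
  ring

lemma aux_tail_est (z : ℂ) (t : ℝ) (ht : 1 < |t|) (hzt : ‖z‖ / |t| ≤ 1/2) :
    |logStar z t| ≤ (‖z‖)^2 / t^2 := by
  have ht0 : t ≠ 0 := fun h => by simp [h] at ht; linarith
  set u : ℂ := -(z / (t:ℂ)) with hu
  have hnu : ‖u‖ ≤ 1/2 := by
    rw [hu, norm_neg]
    simpa [norm_div, Complex.norm_real, Real.norm_eq_abs] using hzt
  have hnu1 : ‖u‖ < 1 := lt_of_le_of_lt hnu (by norm_num)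
  have h1u : (1:ℂ) - z/(t:ℂ) = 1 + u := by rw [hu]; ring
  have hstar : logStar z t = (Complex.log (1 + u) - u).re := by
    unfold logStar
    rw [if_pos ht, h1u, ← Complex.log_re]
    have hre : (z / (t:ℂ)).re = z.re / t := Complex.div_ofReal_re z t
    simp only [Complex.sub_re]
    rw [show u.re = -(z.re/t) by rw [hu, Complex.neg_re, hre]]
    ring
  rw [hstar]
  calc |(Complex.log (1 + u) - u).re| ≤ ‖Complex.log (1 + u) - u‖ :=
        Complex.abs_re_le_norm _
    _ ≤ ‖u‖^2 * (1 - ‖u‖)⁻¹ / 2 := Complex.norm_log_one_add_sub_self_le hnu1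
    _ ≤ ‖u‖^2 * 2 / 2 := by
        have h2 : (1 - ‖u‖)⁻¹ ≤ 2 := by
          rw [inv_le_comm₀ (by linarith) (by norm_num)]
          linarith
        gcongr
    _ = ‖u‖^2 := by ring
    _ = (‖z‖)^2 / t^2 := by
        rw [hu, norm_neg, norm_div, Complex.norm_real, Real.norm_eq_abs,
          div_pow, _root_.sq_abs t]

lemma aux_mid_est (z : ℂ) (hz : z.im ≠ 0) (T : ℝ) (hT : 1 ≤ T) (t : ℝ) (ht0 : t ≠ 0)
    (ht : |t| ≤ T) :
    |logStar z t| ≤ (_root_.abs (Real.log |z.im|) + _root_.abs (Real.log (T + ‖z‖))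
        + |z.re|) + (2 * |t| ^ (-(1/2) : ℝ) + Real.log T) := by
  have ht' : (t : ℂ) ≠ 0 := Complex.ofReal_ne_zero.mpr ht0
  have habs : ‖1 - z / (t:ℂ)‖ = ‖(t:ℂ) - z‖ / |t| := by
    rw [show (1 : ℂ) - z/(t:ℂ) = ((t:ℂ) - z)/(t:ℂ) by field_simp, norm_div, Complex.norm_real, Real.norm_eq_abs]
  have hlow : |z.im| ≤ ‖(t:ℂ) - z‖ := by
    have := Complex.abs_im_le_norm ((t:ℂ) - z)
    simpa using this
  have hup : ‖(t:ℂ) - z‖ ≤ T + ‖z‖ := by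
    calc ‖(t:ℂ) - z‖ ≤ ‖(t:ℂ)‖ + ‖z‖ := by
          simpa [sub_eq_add_neg] using norm_add_le (t:ℂ) (-z)
      _ ≤ T + ‖z‖ := by rw [Complex.norm_real, Real.norm_eq_abs]; linarith
  have him0 : (0:ℝ) < |z.im| := abs_pos.mpr hz
  have habspos : (0:ℝ) < ‖(t:ℂ) - z‖ := lt_of_lt_of_le him0 hlow
  have hlogA : _root_.abs (Real.log (‖(t:ℂ) - z‖))
      ≤ _root_.abs (Real.log |z.im|) + _root_.abs (Real.log (T + ‖z‖)) := by
    have h1 : Real.log |z.im| ≤ Real.log (‖(t:ℂ) - z‖) :=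
      Real.log_le_log him0 hlow
    have h2 : Real.log (‖(t:ℂ) - z‖) ≤ Real.log (T + ‖z‖) :=
      Real.log_le_log habspos hup
    rw [abs_le]
    constructor
    · linarith [neg_abs_le (Real.log |z.im|), abs_nonneg (Real.log (T + ‖z‖))]
    · linarith [le_abs_self (Real.log (T + ‖z‖)), abs_nonneg (Real.log |z.im|)]
  have hlogt : _root_.abs (Real.log |t|) ≤ 2 * |t| ^ (-(1/2) : ℝ) + Real.log T := by
    have htpos : (0:ℝ) < |t| := abs_pos.mpr ht0
    rcases le_or_gt |t| 1 with h | h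
    · have key : _root_.abs (Real.log |t|) ≤ 2 * |t| ^ (-(1/2) : ℝ) := by
        have hlog : Real.log |t| ≤ 0 := Real.log_nonpos htpos.le h
        rw [_root_.abs_of_nonpos hlog]
        have h2 : Real.log (|t| ^ (-(1/2) : ℝ)) ≤ |t| ^ (-(1/2):ℝ) - 1 :=
          Real.log_le_sub_one_of_pos (Real.rpow_pos_of_pos htpos _)
        rw [Real.log_rpow htpos] at h2
        nlinarith [Real.rpow_pos_of_pos htpos (-(1/2):ℝ)]
      have : (0:ℝ) ≤ Real.log T := Real.log_nonneg hT
      linarith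
    · have h1 : (0:ℝ) ≤ Real.log |t| := Real.log_nonneg h.le
      rw [_root_.abs_of_nonneg h1]
      have h3 : Real.log |t| ≤ Real.log T := Real.log_le_log htpos ht
      have h2 : (0:ℝ) ≤ 2 * |t| ^ (-(1/2):ℝ) := by positivity
      linarith
  have hsplit : Real.log (‖1 - z / (t:ℂ)‖)
      = Real.log (‖(t:ℂ) - z‖) - Real.log |t| := by
    rw [habs, Real.log_div habspos.ne' (abs_ne_zero.mpr ht0)]
  have hcore : _root_.abs (Real.log (‖1 - z / (t:ℂ)‖))
      ≤ (_root_.abs (Real.log |z.im|) + _root_.abs (Real.log (T + ‖z‖)))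
        + (2 * |t| ^ (-(1/2):ℝ) + Real.log T) := by
    rw [hsplit]
    calc _root_.abs (Real.log (‖(t:ℂ) - z‖) - Real.log |t|)
        ≤ _root_.abs (Real.log (‖(t:ℂ) - z‖)) + _root_.abs (Real.log |t|) :=
          abs_sub _ _
      _ ≤ _ := add_le_add hlogA hlogt
  unfold logStar
  split_ifs with hcase
  · have hxt : _root_.abs (z.re / t) ≤ |z.re| := by
      rw [abs_div]
      exact div_le_self (abs_nonneg _) hcase.le
    calc _root_.abs (Real.log (‖1 - z / (t:ℂ)‖) + z.re / t)
        ≤ _root_.abs (Real.log (‖1 - z / (t:ℂ)‖)) + _root_.abs (z.re / t) :=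
          abs_add_le _ _
      _ ≤ _ := by linarith [add_le_add hcore hxt]
  · have h0 : (0:ℝ) ≤ |z.re| := abs_nonneg _
    linarith [hcore]

end Aux

open Set Metric

set_option maxHeartbeats 1000000 in
theorem stmt_2 (φ : ℝ → ℝ) (hφ : ContDiff ℝ 1 φ) (hmono : StrictMono φ)
    (c C R : ℝ) (hc : 0 < c) (hC : 0 < C) (hR : 0 < R)
    (hbound : ∀ x : ℝ, R ≤ |x| → c * |x| ≤ |φ x| ∧ |φ x| ≤ C * |x|) :
    ∀ (x y : ℝ), y ≠ 0 →
      HasDerivAt (fun s : ℝ => pot (deriv φ) ((x : ℂ) + (s : ℂ) * Complex.I))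
        (∫ t : ℝ, y / ((x - t) ^ 2 + y ^ 2) * deriv φ t) y := by
  intro x y hy
  have hdiffφ : Differentiable ℝ φ := hφ.differentiable one_ne_zero
  have hder : ∀ t, HasDerivAt φ (deriv φ t) t := fun t => (hdiffφ t).hasDerivAt
  have hcontd : Continuous (deriv φ) := hφ.continuous_deriv le_rfl
  have hdnn : ∀ t, 0 ≤ deriv φ t := fun t => aux_deriv_nonneg hmono.monotone (hder t)
  -- change of variables: key integrability
  have hCoV : Integrable (fun t => |deriv φ t| • ((1 + (φ t)^2)⁻¹ : ℝ)) := by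
    rw [← integrableOn_univ]
    exact (integrableOn_image_iff_integrableOn_abs_deriv_smul MeasurableSet.univ
      (fun t _ => (hder t).hasDerivWithinAt) (hmono.injective.injOn)
      (fun u : ℝ => (1 + u^2)⁻¹)).mp (integrable_inv_one_add_sq.integrableOn)
  set M : ℝ := max |φ R| |φ (-R)| with hMdef
  have hM0 : (0:ℝ) ≤ M := le_trans (abs_nonneg _) (le_max_left _ _)
  have hMφ : ∀ t, |t| ≤ R → |φ t| ≤ M := by
    intro t htR
    rw [abs_le] at htR ⊢
    constructor
    · have h1 : φ (-R) ≤ φ t := hmono.monotone htR.1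
      have h2 : |φ (-R)| ≤ M := le_max_right _ _
      linarith [neg_abs_le (φ (-R))]
    · have h1 : φ t ≤ φ R := hmono.monotone htR.2
      have h2 : |φ R| ≤ M := le_max_left _ _
      linarith [le_abs_self (φ R)]
  have keyInt : Integrable (fun t => deriv φ t * (1 + t^2)⁻¹) := by
    refine (hCoV.const_mul (1 + C^2 + M^2)).mono'
      ((hcontd.mul ((continuous_const.add (continuous_pow 2)).inv₀
        (fun t => (by positivity : (0:ℝ) < 1 + t^2).ne'))).aestronglyMeasurable)
      (Filter.Eventually.of_forall fun t => ?_)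
    have h1 : (0:ℝ) < 1 + t^2 := by positivity
    have h2 : (0:ℝ) < 1 + (φ t)^2 := by positivity
    have key : 1 + (φ t)^2 ≤ (1 + C^2 + M^2) * (1 + t^2) := by
      rcases le_or_gt |t| R with h | h
      · have hk := hMφ t h
        nlinarith [sq_nonneg t, _root_.sq_abs (φ t), abs_nonneg (φ t), hC, sq_nonneg C,
          sq_nonneg (C*t)]
      · have hk := (hbound t h.le).2
        nlinarith [_root_.sq_abs (φ t), _root_.sq_abs t, abs_nonneg t, abs_nonneg (φ t), hM0,
          sq_nonneg (C*t), mul_pos hC hC]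
    have h3 : (1+t^2)⁻¹ ≤ (1 + C^2 + M^2) * (1+(φ t)^2)⁻¹ := by
      rw [inv_eq_one_div, inv_eq_one_div, mul_one_div, div_le_div_iff₀ h1 h2]
      linarith [key]
    calc ‖deriv φ t * (1+t^2)⁻¹‖ = deriv φ t * (1+t^2)⁻¹ := by
          rw [Real.norm_eq_abs, _root_.abs_of_nonneg (mul_nonneg (hdnn t) (by positivity))]
      _ ≤ deriv φ t * ((1 + C^2 + M^2) * (1+(φ t)^2)⁻¹) :=
          mul_le_mul_of_nonneg_left h3 (hdnn t)
      _ = (1 + C^2 + M^2) * (|deriv φ t| • ((1 + (φ t)^2)⁻¹ : ℝ)) := by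
          rw [smul_eq_mul, _root_.abs_of_nonneg (hdnn t)]; ring
  -- generic integrability of weighted deriv
  have genInt : ∀ (K : ℝ) (g : ℝ → ℝ), Continuous g → (∀ t, |g t| ≤ K * (1 + t^2)⁻¹) →
      Integrable (fun t => g t * deriv φ t) := by
    intro K g hg hgb
    refine (keyInt.const_mul K).mono' ((hg.mul hcontd).aestronglyMeasurable)
      (Filter.Eventually.of_forall fun t => ?_)
    calc ‖g t * deriv φ t‖ = |g t| * deriv φ t := by
          rw [Real.norm_eq_abs, abs_mul, _root_.abs_of_nonneg (hdnn t)]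
      _ ≤ (K * (1+t^2)⁻¹) * deriv φ t := mul_le_mul_of_nonneg_right (hgb t) (hdnn t)
      _ = K * (deriv φ t * (1+t^2)⁻¹) := by ring
  -- a.e. nonzero
  have h0ae : ∀ᵐ t : ℝ, t ≠ (0:ℝ) := by
    rw [ae_iff]
    simp only [ne_eq, not_not, Set.setOf_eq_eq_singleton]
    exact Real.volume_singleton
  -- set z and T
  set z : ℂ := (x:ℂ) + (y:ℂ) * Complex.I with hzdef
  have hzre : z.re = x := by simp [hzdef]
  have hzim : z.im = y := by simp [hzdef]
  have habz : (0:ℝ) ≤ ‖z‖ := norm_nonneg z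
  set T : ℝ := 2 * ‖z‖ + 2 with hTdef
  have hT1 : (1:ℝ) ≤ T := by rw [hTdef]; linarith
  have hT0 : (0:ℝ) < T := by linarith
  -- integrability of F y
  have hFint : Integrable (fun t => logStar z t * deriv φ t) := by
    rw [← integrableOn_univ]
    have hsp : (univ : Set ℝ) = Icc (-T) T ∪ (Iio (-T) ∪ Ioi T) := by
      ext t
      simp only [mem_univ, mem_union, mem_Icc, mem_Iio, mem_Ioi, true_iff]
      rcases lt_trichotomy t (-T) with h | h | h
      · exact Or.inr (Or.inl h)
      · exact Or.inl ⟨le_of_eq h.symm, by linarith⟩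
      · rcases le_or_gt t T with h2 | h2
        · exact Or.inl ⟨h.le, h2⟩
        · exact Or.inr (Or.inr h2)
    rw [hsp]
    refine IntegrableOn.union ?_ ?_
    · -- middle part
      obtain ⟨Cb, hCb⟩ := isCompact_Icc.exists_bound_of_continuousOn
        (s := Icc (-T) T) hcontd.continuousOn
      have h0mem : (0:ℝ) ∈ Icc (-T) T := ⟨by linarith, by linarith⟩
      have hCb0 : (0:ℝ) ≤ Cb := le_trans (norm_nonneg _) (hCb 0 h0mem)
      set B : ℝ := _root_.abs (Real.log |z.im|) + _root_.abs (Real.log (T + ‖z‖))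
        + |z.re| with hBdef
      have hB0 : (0:ℝ) ≤ B := by rw [hBdef]; positivity
      have hlogT0 : (0:ℝ) ≤ Real.log T := Real.log_nonneg hT1
      have hdom : IntegrableOn
          (fun t : ℝ => (B + (2 * |t| ^ (-(1/2):ℝ) + Real.log T)) * Cb) (Icc (-T) T) := by
        apply Integrable.mul_const
        apply Integrable.add
        · exact integrableOn_const measure_Icc_lt_top.ne
        · exact ((aux_rpow_int hT0).const_mul 2).add
            (integrableOn_const measure_Icc_lt_top.ne)
      refine hdom.mono' (((aux_logStar_meas z).mul hcontd.measurable).aestronglyMeasurable.restrict)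
        ?_
      rw [ae_restrict_iff' measurableSet_Icc]
      filter_upwards [h0ae] with t ht0 htmem
      have hest := aux_mid_est z (by rw [hzim]; exact hy) T hT1 t ht0
        (abs_le.mpr ⟨htmem.1, htmem.2⟩)
      calc ‖logStar z t * deriv φ t‖ = |logStar z t| * |deriv φ t| := by
            rw [Real.norm_eq_abs, abs_mul]
        _ ≤ (B + (2 * |t| ^ (-(1/2):ℝ) + Real.log T)) * Cb := by
            apply mul_le_mul hest ?_ (abs_nonneg _) ?_
            · simpa [Real.norm_eq_abs] using hCb t htmem
            · have : (0:ℝ) ≤ 2 * |t| ^ (-(1/2):ℝ) := by positivity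
              linarith
    · -- tail part
      refine ((keyInt.const_mul (4 * ‖z‖ ^ 2)).integrableOn).mono'
        (((aux_logStar_meas z).mul hcontd.measurable).aestronglyMeasurable.restrict) ?_
      rw [ae_restrict_iff' (measurableSet_Iio.union measurableSet_Ioi)]
      refine Filter.Eventually.of_forall fun t htmem => ?_
      have habt : T < |t| := by
        rcases htmem with h | h
        · rw [mem_Iio] at h
          rw [abs_of_neg (by linarith)]
          linarith
        · rw [mem_Ioi] at h
          rw [abs_of_pos (by linarith)]
          exact h
      have ht1 : 1 < |t| := by linarith
      have ht0 : t ≠ 0 := by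
        intro h; rw [h, abs_zero] at ht1; linarith
      have hzt : ‖z‖ / |t| ≤ 1/2 := by
        rw [div_le_iff₀ (by linarith : (0:ℝ) < |t|)]
        rw [hTdef] at habt
        linarith
      have hest := aux_tail_est z t ht1 hzt
      have ht2 : (1:ℝ) ≤ t^2 := by nlinarith [_root_.sq_abs t]
      have h1 : (0:ℝ) < t^2 := by nlinarith
      have h2 : (0:ℝ) < 1 + t^2 := by positivity
      have h3 : (t^2)⁻¹ ≤ 4 * (1+t^2)⁻¹ := by
        rw [inv_eq_one_div, inv_eq_one_div, mul_one_div, div_le_div_iff₀ h1 h2]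
        nlinarith
      have key2 : ‖z‖^2 / t^2 ≤ 4 * ‖z‖^2 * (1+t^2)⁻¹ := by
        rw [div_eq_mul_inv]
        calc ‖z‖^2 * (t^2)⁻¹ ≤ ‖z‖^2 * (4 * (1+t^2)⁻¹) :=
              mul_le_mul_of_nonneg_left h3 (by positivity)
          _ = 4 * ‖z‖^2 * (1+t^2)⁻¹ := by ring
      calc ‖logStar z t * deriv φ t‖ = |logStar z t| * deriv φ t := by
            rw [Real.norm_eq_abs, abs_mul, _root_.abs_of_nonneg (hdnn t)]
        _ ≤ (‖z‖^2 / t^2) * deriv φ t := mul_le_mul_of_nonneg_right hest (hdnn t)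
        _ ≤ (4 * ‖z‖^2 * (1+t^2)⁻¹) * deriv φ t :=
            mul_le_mul_of_nonneg_right key2 (hdnn t)
        _ = 4 * ‖z‖^2 * (deriv φ t * (1+t^2)⁻¹) := by ring
  -- bound function integrability
  have hbint : Integrable (fun t => 2 * |y| / ((x - t)^2 + (y/2)^2) * deriv φ t) := by
    apply genInt (2 * |y| * (2 + (1 + 2*x^2) / ((y/2)^2)))
    · apply Continuous.div continuous_const
      · exact ((continuous_const.sub continuous_id).pow 2).add continuous_const
      · intro t
        have : (0:ℝ) < (x - t)^2 + (y/2)^2 := by positivity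
        exact this.ne'
    · intro t
      have hQ : (0:ℝ) < (x - t)^2 + (y/2)^2 := by positivity
      have h1t : (0:ℝ) < 1 + t^2 := by positivity
      have ha : (0:ℝ) < (y/2)^2 := by positivity
      rw [_root_.abs_of_nonneg (by positivity)]
      rw [inv_eq_one_div, mul_one_div, div_le_div_iff₀ hQ h1t]
      have hS : 1 + t^2 ≤ (2 + (1 + 2*x^2) / ((y/2)^2)) * ((x - t)^2 + (y/2)^2) := by
        have hdiv : (1 + 2*x^2) / ((y/2)^2) * ((y/2)^2) = 1 + 2*x^2 :=
          div_mul_cancel₀ _ ha.ne'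
        nlinarith [sq_nonneg (2*x - t), sq_nonneg (x - t),
          mul_nonneg (div_nonneg (by positivity : (0:ℝ) ≤ 1 + 2*x^2) ha.le)
            (sq_nonneg (x - t))]
      calc 2*|y| * (1 + t^2)
          ≤ 2*|y| * ((2 + (1 + 2*x^2) / ((y/2)^2)) * ((x - t)^2 + (y/2)^2)) :=
            mul_le_mul_of_nonneg_left hS (by positivity)
        _ = 2*|y| * (2 + (1 + 2*x^2) / ((y/2)^2)) * ((x - t)^2 + (y/2)^2) := by ring
  -- main application
  have hyp : (0:ℝ) < |y| / 2 := by
    have : (0:ℝ) < |y| := abs_pos.mpr hy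
    linarith
  have hmeas' : ∀ᶠ (s : ℝ) in nhds y, AEStronglyMeasurable
      (fun t : ℝ => logStar ((x:ℂ) + (s:ℂ) * Complex.I) t * deriv φ t) volume :=
    Filter.Eventually.of_forall fun s =>
      ((aux_logStar_meas _).mul hcontd.measurable).aestronglyMeasurable
  have hFint' : Integrable (fun t : ℝ => logStar ((x:ℂ) + (y:ℂ) * Complex.I) t * deriv φ t)
      volume := hFint
  have hF'meas' : AEStronglyMeasurable
      (fun t : ℝ => y / ((x - t)^2 + y^2) * deriv φ t) volume := by
    apply Continuous.aestronglyMeasurable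
    apply Continuous.mul ?_ hcontd
    apply Continuous.div continuous_const
      (((continuous_const.sub continuous_id).pow 2).add continuous_const)
    intro t
    have h5 : (0:ℝ) < (x - t)^2 + y^2 := by positivity
    exact h5.ne'
  have hbound' : ∀ᵐ t : ℝ ∂volume, ∀ s ∈ ball y (|y|/2),
      ‖s / ((x - t)^2 + s^2) * deriv φ t‖ ≤ 2 * |y| / ((x - t)^2 + (y/2)^2) * deriv φ t := by
    refine Filter.Eventually.of_forall fun t => fun s hs => ?_
    have h1 : |s - y| < |y|/2 := by rwa [mem_ball, Real.dist_eq] at hs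
    have h2 : |s| ≤ 2 * |y| := by
      have := abs_sub_abs_le_abs_sub s y
      linarith
    have h3 : |y|/2 ≤ |s| := by
      have h4 := abs_sub_abs_le_abs_sub y s
      rw [abs_sub_comm y s] at h4
      linarith
    have h4 : (y/2)^2 ≤ s^2 := by
      nlinarith [_root_.sq_abs s, _root_.sq_abs y, abs_nonneg y]
    have hden : (0:ℝ) < (x - t)^2 + (y/2)^2 := by positivity
    calc ‖s / ((x - t)^2 + s^2) * deriv φ t‖
        = |s| / ((x - t)^2 + s^2) * deriv φ t := by
          rw [Real.norm_eq_abs, abs_mul, _root_.abs_of_nonneg (hdnn t), abs_div,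
            _root_.abs_of_nonneg (by positivity : (0:ℝ) ≤ (x - t)^2 + s^2)]
      _ ≤ 2 * |y| / ((x - t)^2 + (y/2)^2) * deriv φ t := by
          apply mul_le_mul_of_nonneg_right ?_ (hdnn t)
          exact div_le_div₀ (by positivity) h2 hden (by linarith)
  have hdiff' : ∀ᵐ t : ℝ ∂volume, ∀ s ∈ ball y (|y|/2),
      HasDerivAt (fun s : ℝ => logStar ((x:ℂ) + (s:ℂ) * Complex.I) t * deriv φ t)
        (s / ((x - t)^2 + s^2) * deriv φ t) s := by
    filter_upwards [h0ae] with t ht0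
    intro s hs
    have h1 : |s - y| < |y|/2 := by rwa [mem_ball, Real.dist_eq] at hs
    have hs0 : s ≠ 0 := by
      intro h
      rw [h] at h1
      simp only [zero_sub, abs_neg] at h1
      linarith
    exact aux_hasDerivAt x t ht0 (deriv φ t) s hs0
  have main := hasDerivAt_integral_of_dominated_loc_of_deriv_le (𝕜 := ℝ)
    (F := fun (s : ℝ) (t : ℝ) => logStar ((x:ℂ) + (s:ℂ) * Complex.I) t * deriv φ t)
    (F' := fun (s : ℝ) (t : ℝ) => s / ((x - t)^2 + s^2) * deriv φ t)
    (ball_mem_nhds y hyp) hmeas' hFint' hF'meas' hbound' hbint hdiff'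
  simpa only [pot] using main.2
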